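/- If G is a connected well-covered graph with diam(G) = 2, then Γρ(G) = χρ(G). -/

import Mathlib

open SimpleGraph

/-- A packing `k`-coloring of `G`: colors in `{1,…,k}` and vertices of equal color `i`
are at distance greater than `i` (vertices in different components are unconstrained). -/
def IsPackingColoring {V : Type*} (G : SimpleGraph V) (k : ℕ) (c : V → ℕ) : Prop :=
  (∀ v, 1 ≤ c v ∧ c v ≤ k) ∧
  ∀ u v, u ≠ v → c u = c v → G.Reachable u v → c u < G.dist u v

/-- A greedy packing `k`-coloring: a packing `k`-coloring that uses color `k` and in which
every vertex of color `i ≥ 2` has, for every `j < i`, a vertex of color `j`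
at distance at most `j`. -/
def IsGreedyPackingColoring {V : Type*} (G : SimpleGraph V) (k : ℕ) (c : V → ℕ) : Prop :=
  IsPackingColoring G k c ∧ (∃ v, c v = k) ∧
  ∀ v, ∀ j, 1 ≤ j → j < c v → ∃ u, c u = j ∧ G.Reachable u v ∧ G.dist u v ≤ j

/-- The Grundy packing chromatic number: the largest `k` admitting a greedy packing
`k`-coloring. -/
noncomputable def grundyPackingChromaticNumber {V : Type*} (G : SimpleGraph V) : ℕ :=
  sSup {k | ∃ c : V → ℕ, IsGreedyPackingColoring G k c}

/-- The packing chromatic number: the smallest `k` admitting a packing `k`-coloring. -/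
noncomputable def packingChromaticNumber {V : Type*} (G : SimpleGraph V) : ℕ :=
  sInf {k | ∃ c : V → ℕ, IsPackingColoring G k c}

/-- `s` is an independent set of `G`. -/
def IsIndepFinset {V : Type*} (G : SimpleGraph V) (s : Finset V) : Prop :=
  ∀ u ∈ s, ∀ v ∈ s, ¬ G.Adj u v

/-- `s` is a maximal independent set of `G`. -/
def IsMaxIndepFinset {V : Type*} (G : SimpleGraph V) (s : Finset V) : Prop :=
  IsIndepFinset G s ∧ ∀ t : Finset V, IsIndepFinset G t → s ⊆ t → s = t

/-- The independent domination number `i(G)`: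
the minimum cardinality of a maximal independent set. -/
noncomputable def indepDomNum {V : Type*} (G : SimpleGraph V) [Fintype V] : ℕ :=
  sInf {n | ∃ s : Finset V, IsMaxIndepFinset G s ∧ s.card = n}

/-- The graph `G^ℓ`: same vertices, `u ∼ v` iff `u ≠ v` and `d_G(u,v) ≤ ℓ`. -/
def distPow {V : Type*} (G : SimpleGraph V) (ℓ : ℕ) : SimpleGraph V where
  Adj u v := u ≠ v ∧ G.dist u v ≤ ℓ
  symm := by
    constructor
    rintro u v ⟨h1, h2⟩
    exact ⟨h1.symm, by rwa [SimpleGraph.dist_comm]⟩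
  loopless := by constructor; rintro v ⟨h, _⟩; exact h rfl

/-- The graph `G(k)`: vertex set is `k` disjoint copies of `V(G)`, the copy `i : Fin k`
playing the role of `G^(i+1)`; the `k` copies of each vertex form a clique, and within the
`i`-th copy two distinct vertices are adjacent iff their distance in `G` is at most `i+1`. -/
def levelGraph {V : Type*} (G : SimpleGraph V) (k : ℕ) : SimpleGraph (V × Fin k) where
  Adj p q := (p.1 = q.1 ∧ p.2 ≠ q.2) ∨
    (p.1 ≠ q.1 ∧ p.2 = q.2 ∧ G.dist p.1 q.1 ≤ (p.2 : ℕ) + 1)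
  symm := by
    constructor
    rintro p q (⟨h1, h2⟩ | ⟨h1, h2, h3⟩)
    · exact Or.inl ⟨h1.symm, h2.symm⟩
    · refine Or.inr ⟨h1.symm, h2.symm, ?_⟩
      rw [SimpleGraph.dist_comm, ← h2]
      exact h3
  loopless := by constructor; rintro p (⟨_, h⟩ | ⟨h, _, _⟩) <;> exact h rfl

/-- `A` is a maximal independent set of the subgraph of `H` induced on `S`. -/
def IsMaxIndepSetOn {V : Type*} (H : SimpleGraph V) (S : Set V) (A : Set V) : Prop :=
  A ⊆ S ∧ (∀ u ∈ A, ∀ v ∈ A, ¬ H.Adj u v) ∧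
  ∀ B : Set V, B ⊆ S → (∀ u ∈ B, ∀ v ∈ B, ¬ H.Adj u v) → A ⊆ B → A = B

/-- The eccentricity of a vertex. -/
noncomputable def eccent {V : Type*} (G : SimpleGraph V) [Fintype V] (v : V) : ℕ :=
  Finset.univ.sup (fun u => G.dist v u)

/-- The radius of a graph. -/
noncomputable def graphRadius {V : Type*} (G : SimpleGraph V) [Fintype V] : ℕ :=
  sInf (Set.range (eccent G))

/-- The diameter of a graph. -/
noncomputable def graphDiam {V : Type*} (G : SimpleGraph V) [Fintype V] : ℕ :=
  Finset.univ.sup (eccent G)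

/-- The diametrical graph `D(G)`: `x ∼ y` iff `d_G(x,y) = diam(G)`. -/
noncomputable def diamGraph {V : Type*} (G : SimpleGraph V) [Fintype V] : SimpleGraph V where
  Adj u v := u ≠ v ∧ G.dist u v = graphDiam G
  symm := by
    constructor
    rintro u v ⟨h1, h2⟩
    exact ⟨h1.symm, by rwa [SimpleGraph.dist_comm]⟩
  loopless := by constructor; rintro v ⟨h, _⟩; exact h rfl

/-- `Q` is a clique of the subgraph of `H` induced on `S`. -/
def IsCliqueFinsetOn {V : Type*} (H : SimpleGraph V) (S : Set V) (Q : Finset V) : Prop :=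
  ↑Q ⊆ S ∧ ∀ u ∈ Q, ∀ v ∈ Q, u ≠ v → H.Adj u v

/-- `Q` is a maximal clique of the subgraph of `H` induced on `S`. -/
def IsMaxCliqueFinsetOn {V : Type*} (H : SimpleGraph V) (S : Set V) (Q : Finset V) : Prop :=
  IsCliqueFinsetOn H S Q ∧ ∀ R : Finset V, IsCliqueFinsetOn H S R → Q ⊆ R → Q = R

/-- The join `G ∨ H` of two graphs. -/
def joinGraph {V W : Type*} (G : SimpleGraph V) (H : SimpleGraph W) :
    SimpleGraph (V ⊕ W) where
  Adj p q := match p, q with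
    | .inl u, .inl v => G.Adj u v
    | .inr u, .inr v => H.Adj u v
    | .inl _, .inr _ => True
    | .inr _, .inl _ => True
  symm := by
    constructor
    rintro (u | u) (v | v) h
    · exact G.adj_symm h
    · trivial
    · trivial
    · exact H.adj_symm h
  loopless := by
    constructor
    rintro (u | u) h
    · exact G.irrefl h
    · exact H.irrefl h

/-- `K_{n,n}` minus a perfect matching: parts `{u_i}` and `{v_i}`, with `u_i ∼ v_j` iff
`i ≠ j`. -/
def completeBipartiteMinusMatching (n : ℕ) : SimpleGraph (Fin n ⊕ Fin n) where
  Adj p q := match p, q with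
    | .inl i, .inr j => i ≠ j
    | .inr i, .inl j => i ≠ j
    | _, _ => False
  symm := by constructor; rintro (i | i) (j | j) h <;> first | exact h.symm | exact h
  loopless := by constructor; rintro (i | i) h <;> exact h


-- AUX START
lemma exists_maxIndep_superset {V : Type*} [Fintype V] (G : SimpleGraph V) (s : Finset V)
    (hs : IsIndepFinset G s) : ∃ t, IsMaxIndepFinset G t ∧ s ⊆ t := by
  have hfin : ({t : Finset V | IsIndepFinset G t ∧ s ⊆ t}).Finite := Set.toFinite _
  obtain ⟨a, ha, hmax0⟩ := Set.exists_max_image _ Finset.card hfin ⟨s, hs, subset_rfl⟩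
  have hmax : ∀ t, t ∈ {t : Finset V | IsIndepFinset G t ∧ s ⊆ t} → a.card ≤ t.card →
      a.card = t.card := fun t ht h => le_antisymm h (hmax0 t ht)
  refine ⟨a, ⟨ha.1, ?_⟩, ha.2⟩
  intro t ht hat
  exact Finset.eq_of_subset_of_card_le hat
    (le_of_eq (hmax t ⟨ht, ha.2.trans hat⟩ (Finset.card_le_card hat)).symm)

lemma maxIndep_dominates {V : Type*} (G : SimpleGraph V) {S : Finset V}
    (hS : IsMaxIndepFinset G S) {v : V} (hv : v ∉ S) : ∃ u ∈ S, G.Adj u v := by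
  classical
  by_contra h
  push_neg at h
  have hins : IsIndepFinset G (insert v S) := by
    intro a ha b hb
    rw [Finset.mem_insert] at ha hb
    rcases ha with ha | ha
    · rcases hb with hb | hb
      · subst ha; subst hb; exact G.irrefl
      · subst ha; exact fun hadj => h b hb (G.adj_symm hadj)
    · rcases hb with hb | hb
      · subst hb; exact h a ha
      · exact hS.1 a ha b hb
  have := hS.2 _ hins (Finset.subset_insert _ _)
  exact hv (this ▸ Finset.mem_insert_self v S)

lemma greedy_of_maxIndep {V : Type*} [Fintype V] [DecidableEq V] (G : SimpleGraph V)
    (hG : G.Connected) (hdist : ∀ u v : V, G.dist u v ≤ 2) (S : Finset V)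
    (hS : IsMaxIndepFinset G S) :
    ∃ c : V → ℕ, IsGreedyPackingColoring G (Sᶜ.card + 1) c := by
  set e := Sᶜ.equivFin with he
  set c : V → ℕ := fun v =>
    if h : v ∈ S then 1 else (e ⟨v, Finset.mem_compl.2 h⟩).val + 2 with hc
  have hc1 : ∀ v ∈ S, c v = 1 := fun v hv => dif_pos hv
  have hc2 : ∀ v (h : v ∉ S), c v = (e ⟨v, Finset.mem_compl.2 h⟩).val + 2 :=
    fun v h => dif_neg h
  have hbound : ∀ v, 1 ≤ c v ∧ c v ≤ Sᶜ.card + 1 := by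
    intro v
    by_cases h : v ∈ S
    · rw [hc1 v h]; omega
    · rw [hc2 v h]
      have := (e ⟨v, Finset.mem_compl.2 h⟩).isLt
      omega
  refine ⟨c, ⟨hbound, ?_⟩, ?_, ?_⟩
  · -- packing
    intro u v huv hcc hr
    by_cases hu : u ∈ S <;> by_cases hv : v ∈ S
    · rw [hc1 u hu]
      rcases Nat.lt_or_ge 1 (G.dist u v) with h | h
      · exact h
      · exfalso
        interval_cases h' : G.dist u v
        · exact huv (hr.dist_eq_zero_iff.1 h')
        · exact hS.1 u hu v hv (dist_eq_one_iff_adj.1 h')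
    · rw [hc1 u hu, hc2 v hv] at hcc; omega
    · rw [hc2 u hu, hc1 v hv] at hcc; omega
    · exfalso
      rw [hc2 u hu, hc2 v hv] at hcc
      have : e ⟨u, Finset.mem_compl.2 hu⟩ = e ⟨v, Finset.mem_compl.2 hv⟩ :=
        Fin.ext (by omega)
      exact huv (congrArg Subtype.val (e.injective this))
  · -- uses top color
    rcases Nat.eq_zero_or_pos Sᶜ.card with h0 | h0
    · obtain ⟨v⟩ := hG.nonempty
      have hv : v ∈ S := by
        by_contra hv
        have hmem : v ∈ Sᶜ := Finset.mem_compl.2 hv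
        rw [Finset.card_eq_zero] at h0
        rw [h0] at hmem
        exact absurd hmem (Finset.notMem_empty v)
      exact ⟨v, by rw [hc1 v hv]; omega⟩
    · set u := (e.symm ⟨Sᶜ.card - 1, by omega⟩ : {x // x ∈ Sᶜ})
      refine ⟨u.val, ?_⟩
      have hu : (u : V) ∉ S := Finset.mem_compl.1 u.2
      rw [hc2 _ hu]
      have : (⟨u.val, Finset.mem_compl.2 hu⟩ : {x // x ∈ Sᶜ}) = u := Subtype.ext rfl
      rw [this]
      simp [u]
      omega
  · -- greedy
    intro v j hj1 hjv
    have hv : v ∉ S := by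
      intro hv; rw [hc1 v hv] at hjv; omega
    rcases Nat.lt_or_ge j 2 with hj2 | hj2
    · -- j = 1
      have hj : j = 1 := by omega
      obtain ⟨u, hu, hadj⟩ := maxIndep_dominates G hS hv
      exact ⟨u, by rw [hc1 u hu, hj], hadj.reachable,
        by rw [dist_eq_one_iff_adj.2 hadj, hj]⟩
    · -- j ≥ 2
      rw [hc2 v hv] at hjv
      have hlt := (e ⟨v, Finset.mem_compl.2 hv⟩).isLt
      have hj2' : j - 2 < Sᶜ.card := by omega
      set u := (e.symm ⟨j - 2, hj2'⟩ : {x // x ∈ Sᶜ})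
      have hu : (u : V) ∉ S := Finset.mem_compl.1 u.2
      refine ⟨u.val, ?_, hG.preconnected _ _, le_trans (hdist _ _) hj2⟩
      rw [hc2 _ hu]
      have h1 : (⟨u.val, Finset.mem_compl.2 hu⟩ : {x // x ∈ Sᶜ}) = u := Subtype.ext rfl
      rw [h1]
      simp [u]
      omega
-- AUX END

/-- If `G` is a connected well-covered graph with `diam(G) = 2`, then
`Γρ(G) = χρ(G)`. -/
theorem grundyPackingChromaticNumber_eq_packingChromaticNumber_of_wellCovered {V : Type*}
    [Fintype V] (G : SimpleGraph V) (hG : G.Connected)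
    (hwc : ∀ A B : Finset V, IsMaxIndepFinset G A → IsMaxIndepFinset G B →
      A.card = B.card)
    (hd : graphDiam G = 2) :
    grundyPackingChromaticNumber G = packingChromaticNumber G := by
  classical
  have hdist : ∀ u v : V, G.dist u v ≤ 2 := by
    intro u v
    have h1 : G.dist u v ≤ _root_.eccent G u :=
      Finset.le_sup (f := fun w => G.dist u w) (Finset.mem_univ v)
    have h2 : _root_.eccent G u ≤ graphDiam G := Finset.le_sup (Finset.mem_univ u)
    omega
  set n := Fintype.card V with hn
  obtain ⟨S0, hS0, -⟩ := exists_maxIndep_superset G ∅ (by intro u hu; simp at hu)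
  set m := S0.card with hm
  have hmn : m ≤ n := Finset.card_le_univ S0
  have hindep_le : ∀ s : Finset V, IsIndepFinset G s → s.card ≤ m := by
    intro s hs
    obtain ⟨t, ht, hst⟩ := exists_maxIndep_superset G s hs
    calc s.card ≤ t.card := Finset.card_le_card hst
    _ = m := hwc t S0 ht hS0
  -- the color-1 class of any packing coloring is independent
  have hTindep : ∀ (k : ℕ) (c : V → ℕ), IsPackingColoring G k c →
      IsIndepFinset G (Finset.univ.filter (fun v => c v = 1)) := by
    intro k c hc u hu v hv hadj
    have hu1 : c u = 1 := (Finset.mem_filter.1 hu).2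
    have hv1 : c v = 1 := (Finset.mem_filter.1 hv).2
    have hne : u ≠ v := G.ne_of_adj hadj
    have := hc.2 u v hne (hu1.trans hv1.symm) hadj.reachable
    rw [hu1, dist_eq_one_iff_adj.2 hadj] at this
    omega
  -- lower bound for packing colorings
  have hpack_bound : ∀ (k : ℕ) (c : V → ℕ), IsPackingColoring G k c → n - m + 1 ≤ k := by
    intro k c hc
    set T := Finset.univ.filter (fun v => c v = 1) with hT
    have hTm : T.card ≤ m := hindep_le T (hTindep k c hc)
    have hmem2 : ∀ v ∈ Tᶜ, c v ∈ Finset.Icc 2 k := by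
      intro v hv
      have hv1 : ¬ (c v = 1) := by
        have := Finset.mem_compl.1 hv
        simpa [hT] using this
      have hb := hc.1 v
      exact Finset.mem_Icc.2 ⟨by omega, hb.2⟩
    have hcompl : Tᶜ.card ≤ k - 1 := by
      have hinj : Set.InjOn c ↑Tᶜ := by
        intro u hu v hv hcc
        by_contra hne
        have h2 := hc.2 u v hne hcc (hG.preconnected u v)
        have h3 := hdist u v
        have h4 := Finset.mem_Icc.1 (hmem2 u hu)
        omega
      calc Tᶜ.card ≤ (Finset.Icc 2 k).card :=
            Finset.card_le_card_of_injOn c hmem2 hinj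
      _ = k - 1 := by rw [Nat.card_Icc]; omega
    have hsplit : T.card + Tᶜ.card = n := Finset.card_add_card_compl T
    have hk1 : 1 ≤ k := by
      obtain ⟨v⟩ := hG.nonempty
      have := hc.1 v
      omega
    omega
  -- upper bound for greedy packing colorings
  have hgreedy_bound : ∀ (k : ℕ) (c : V → ℕ), IsGreedyPackingColoring G k c →
      k ≤ n - m + 1 := by
    intro k c hgc
    obtain ⟨hc, ⟨w, hw⟩, hgreedy⟩ := hgc
    set T := Finset.univ.filter (fun v => c v = 1) with hT
    have hnotT : ∀ v : V, v ∉ T → 2 ≤ c v := by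
      intro v hv
      have hv1 : ¬ (c v = 1) := by simpa [hT] using hv
      have := hc.1 v
      omega
    have hTmax : IsMaxIndepFinset G T := by
      refine ⟨hTindep k c hc, ?_⟩
      intro t ht hsub
      by_contra hne
      obtain ⟨v, hvt, hvT⟩ := Finset.exists_of_ssubset
        ((Finset.ssubset_iff_subset_ne).2 ⟨hsub, hne⟩)
      obtain ⟨u, hu1, hur, hud⟩ := hgreedy v 1 le_rfl (by have := hnotT v hvT; omega)
      have hune : u ≠ v := by
        intro h
        rw [h] at hu1
        have := hnotT v hvT
        omega
      have hd1 : G.dist u v = 1 := by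
        have h0 : G.dist u v ≠ 0 := fun h => hune (hur.dist_eq_zero_iff.1 h)
        omega
      have hadj : G.Adj u v := dist_eq_one_iff_adj.1 hd1
      have huT : u ∈ T := Finset.mem_filter.2 ⟨Finset.mem_univ u, hu1⟩
      exact ht u (hsub huT) v hvt hadj
    have hTm : T.card = m := hwc T S0 hTmax hS0
    have hused : ∀ j ∈ Finset.Icc 2 k, ∃ v ∈ Tᶜ, c v = j := by
      intro j hj
      obtain ⟨hj2, hjk⟩ := Finset.mem_Icc.1 hj
      rcases eq_or_lt_of_le hjk with rfl | hjk
      · refine ⟨w, Finset.mem_compl.2 ?_, hw⟩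
        intro hmem
        have := (Finset.mem_filter.1 hmem).2
        omega
      · obtain ⟨u, hu, -, -⟩ := hgreedy w j (by omega) (by omega)
        refine ⟨u, Finset.mem_compl.2 ?_, hu⟩
        intro hmem
        have := (Finset.mem_filter.1 hmem).2
        omega
    have hcard : (Finset.Icc 2 k).card ≤ Tᶜ.card := by
      apply Finset.card_le_card_of_surjOn c
      intro j hj
      obtain ⟨v, hv, hcv⟩ := hused j hj
      exact ⟨v, hv, hcv⟩
    rw [Nat.card_Icc] at hcard
    have hsplit : T.card + Tᶜ.card = n := Finset.card_add_card_compl T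
    omega
  -- the common value is attained
  obtain ⟨c0, hc0⟩ := greedy_of_maxIndep G hG hdist S0 hS0
  have hcompl0 : S0ᶜ.card = n - m := by rw [Finset.card_compl]
  rw [hcompl0] at hc0
  have hGreatest : IsGreatest {k | ∃ c : V → ℕ, IsGreedyPackingColoring G k c} (n - m + 1) :=
    ⟨⟨c0, hc0⟩, fun k ⟨c, hc⟩ => hgreedy_bound k c hc⟩
  have hLeast : IsLeast {k | ∃ c : V → ℕ, IsPackingColoring G k c} (n - m + 1) :=
    ⟨⟨c0, hc0.1⟩, fun k ⟨c, hc⟩ => hpack_bound k c hc⟩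
  rw [grundyPackingChromaticNumber, packingChromaticNumber,
    hGreatest.csSup_eq, hLeast.csInf_eq]
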